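/- Let k, d be positive integers, Σ a finite set, Φ ∈ Σ^{k×d} a signal matrix, L ∈ ℝ^{k×d} a loss matrix, Π ⊆ [k], and T a directed in-tree on vertex set Π. Suppose that for every edge e = (a,b) ∈ T there is a function w_e : [k] × Σ → ℝ such that Σ_{c=1}^k w_e(c, Φ_{c,x}) = L_{a,x} − L_{b,x} for all x ∈ [d]. Define G : [k] × Σ → ℝ^k by G(a,σ)_b = Σ_{e ∈ path_T(b)} w_e(a,σ) for b ∈ Π. Then for all b, c ∈ Π and all x ∈ [d], Σ_{a=1}^k ( G(a, Φ_{a,x})_b − G(a, Φ_{a,x})_c ) = L_{b,x} − L_{c,x}. -/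

import Mathlib

/-- A directed in-tree on a finite vertex type `V`: every vertex has a parent
(the root is its own parent) and every vertex reaches the root by iterating
the parent map.  The edges are the pairs `(v, par v)` for `v ≠ root`, and the
path from `v` to the root is the set of edges traversed by iterating `par`. -/
structure InTree (V : Type*) [Fintype V] [DecidableEq V] where
  root : V
  par : V → V
  par_root : par root = root
  reaches : ∀ v : V, ∃ n : ℕ, par^[n] v = root

variable {V : Type*} [Fintype V] [DecidableEq V]

/-- The edge set of an in-tree. -/
def InTree.edges (T : InTree V) : Finset (V × V) :=
  (Finset.univ.filter (fun v => v ≠ T.root)).image (fun v => (v, T.par v))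

/-- The depth of a vertex: the number of steps needed to reach the root. -/
def InTree.depth (T : InTree V) (v : V) : ℕ := Nat.find (T.reaches v)

/-- The set of edges on the directed path from `v` to the root. -/
def InTree.path (T : InTree V) (v : V) : Finset (V × V) :=
  (Finset.range (T.depth v)).image (fun i => (T.par^[i] v, T.par^[i + 1] v))

lemma InTree.iterate_root (T : InTree V) (n : ℕ) : T.par^[n] T.root = T.root :=
  Function.iterate_fixed T.par_root n

lemma InTree.periodic_eq_root (T : InTree V) (u : V) (p q : ℕ) (hp : 0 < p)
    (h1 : T.par^[p] u = u) (h2 : T.par^[q] u = T.root) : u = T.root := by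
  have h3 : T.par^[p * q] u = u := by
    rw [Function.iterate_mul]
    exact Function.iterate_fixed h1 q
  have hq : q ≤ p * q := Nat.le_mul_of_pos_left q hp
  calc u = T.par^[p * q] u := h3.symm
    _ = T.par^[p * q - q] (T.par^[q] u) := by
        rw [← Function.iterate_add_apply, Nat.sub_add_cancel hq]
    _ = T.root := by rw [h2]; exact T.iterate_root _

lemma InTree.not_root_of_lt_depth (T : InTree V) (v : V) {i : ℕ} (hi : i < T.depth v) :
    T.par^[i] v ≠ T.root := Nat.find_min (T.reaches v) hi

lemma InTree.iterate_depth (T : InTree V) (v : V) : T.par^[T.depth v] v = T.root :=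
  Nat.find_spec (T.reaches v)

lemma InTree.path_sum (T : InTree V) (v : V) (f : V × V → ℝ) :
    ∑ e ∈ T.path v, f e
      = ∑ i ∈ Finset.range (T.depth v), f (T.par^[i] v, T.par^[i + 1] v) := by
  rw [InTree.path, Finset.sum_image]
  intro i hi j hj hij
  simp only [Finset.mem_coe, Finset.coe_range, Set.mem_Iio, Finset.mem_range] at hi hj
  by_contra hne
  wlog hlt : i < j generalizing i j
  · exact this (i := j) (j := i) (hij := hij.symm) (hi := hj) (hj := hi) (hne := Ne.symm hne) (by omega)
  have h1 : T.par^[j - i] (T.par^[i] v) = T.par^[i] v := by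
    rw [← Function.iterate_add_apply, Nat.sub_add_cancel hlt.le]
    exact (congrArg Prod.fst hij).symm
  have h2 : T.par^[T.depth v - i] (T.par^[i] v) = T.root := by
    rw [← Function.iterate_add_apply, Nat.sub_add_cancel hi.le]
    exact T.iterate_depth v
  exact T.not_root_of_lt_depth v hi (T.periodic_eq_root _ _ _ (by omega) h1 h2)

theorem stmt0 (k d : ℕ) (hk : 0 < k) (hd : 0 < d) (S : Type*) [Fintype S]
    (Φ : Fin k → Fin d → S) (L : Fin k → Fin d → ℝ)
    (Pa : Finset (Fin k))
    (T : InTree {a : Fin k // a ∈ Pa})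
    (w : ({a : Fin k // a ∈ Pa} × {a : Fin k // a ∈ Pa}) → Fin k → S → ℝ)
    (hw : ∀ e ∈ T.edges, ∀ x : Fin d,
      ∑ c : Fin k, w e c (Φ c x) = L e.1.1 x - L e.2.1 x)
    (G : Fin k → S → Fin k → ℝ)
    (hG : ∀ (a : Fin k) (σ : S) (b : {a : Fin k // a ∈ Pa}),
      G a σ b.1 = ∑ e ∈ T.path b, w e a σ) :
    ∀ (b c : {a : Fin k // a ∈ Pa}) (x : Fin d),
      ∑ a : Fin k, (G a (Φ a x) b.1 - G a (Φ a x) c.1) = L b.1 x - L c.1 x := by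
  have main : ∀ (b : {a : Fin k // a ∈ Pa}) (x : Fin d),
      ∑ a : Fin k, G a (Φ a x) b.1 = L b.1 x - L T.root.1 x := by
    intro b x
    have h1 : ∑ a : Fin k, G a (Φ a x) b.1
        = ∑ e ∈ T.path b, ∑ a : Fin k, w e a (Φ a x) := by
      simp_rw [hG]
      exact Finset.sum_comm
    rw [h1]
    have h2 : ∀ e ∈ T.path b, ∑ a : Fin k, w e a (Φ a x) = L e.1.1 x - L e.2.1 x := by
      intro e he
      apply hw e _ x
      simp only [InTree.path, Finset.mem_image, Finset.mem_range] at he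
      obtain ⟨i, hi, rfl⟩ := he
      simp only [InTree.edges, Finset.mem_image, Finset.mem_filter, Finset.mem_univ]
      exact ⟨T.par^[i] b, ⟨trivial, T.not_root_of_lt_depth b hi⟩,
        by rw [Function.iterate_succ_apply']⟩
    rw [Finset.sum_congr rfl h2, InTree.path_sum T b (fun e => L e.1.1 x - L e.2.1 x)]
    have := Finset.sum_range_sub' (fun i => L (T.par^[i] b).1 x) (T.depth b)
    simpa [T.iterate_depth b] using this
  intro b c x
  rw [Finset.sum_sub_distrib, main b x, main c x]
  ring
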